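/- For the complete binary tree B_k^* with k levels (and 2^k − 1 vertices), k ≤ cfc(B_k^*) ≤ 2k − 2 (for k ≥ 2). -/

import Mathlib

/-- `c` is a conflict-free connection coloring of `G`: every pair of distinct
vertices is joined by a path on which some color appears on exactly one edge. -/
def IsCFCColoring {V : Type*} (G : SimpleGraph V) (c : Sym2 V → ℕ) : Prop :=
  ∀ u v : V, u ≠ v → ∃ p : G.Walk u v, p.IsPath ∧
    ∃ col : ℕ, (p.edges.filter (fun e => c e = col)).length = 1

/-- The conflict-free connection number of `G`: the least `k` such that some
coloring of the edges of `G` with colors `0, …, k-1` is a conflict-free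
connection coloring. -/
noncomputable def cfcNum {V : Type*} [Fintype V] (G : SimpleGraph V) : ℕ :=
  sInf {k | ∃ c : Sym2 V → ℕ, (∀ e ∈ G.edgeSet, c e < k) ∧ IsCFCColoring G c}
/-- The complete binary tree with `k` levels and `2^k - 1` vertices, in heap
indexing: vertex `0` is the root, and each nonzero vertex `x` has parent
`(x - 1) / 2`. -/
def completeBinaryTree (k : ℕ) : SimpleGraph (Fin (2 ^ k - 1)) :=
  SimpleGraph.fromRel (fun x y => (x : ℕ) ≠ 0 ∧ (y : ℕ) = ((x : ℕ) - 1) / 2)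


namespace CFCAux

def pa (x : ℕ) : ℕ := (x - 1) / 2
def dep (x : ℕ) : ℕ := Nat.log 2 (x + 1)
def g (x : ℕ) : ℕ := 2 * (dep x - 1) + x % 2

lemma pa_lt {x : ℕ} (h : x ≠ 0) : pa x < x := by unfold pa; omega
lemma pa_le (x : ℕ) : pa x ≤ x := by unfold pa; omega

lemma dep_zero : dep 0 = 0 := by simp [dep]
lemma dep_pos {x : ℕ} (h : x ≠ 0) : 1 ≤ dep x := Nat.log_pos one_lt_two (by omega)
lemma ne_zero_of_dep {x : ℕ} (h : 1 ≤ dep x) : x ≠ 0 := by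
  rintro rfl; rw [dep_zero] at h; omega

lemma dep_pa {x : ℕ} (h : x ≠ 0) : dep (pa x) = dep x - 1 := by
  have h1 : pa x + 1 = (x + 1) / 2 := by unfold pa; omega
  unfold dep
  rw [h1, Nat.log_div_base]

lemma dep_child1 (l : ℕ) : dep (2 * l + 1) = dep l + 1 := by
  have h := Nat.log_div_base 2 (2 * l + 2)
  rw [show (2 * l + 2) / 2 = l + 1 by omega] at h
  have h3 : 1 ≤ Nat.log 2 (2 * l + 2) := Nat.log_pos one_lt_two (by omega)
  unfold dep
  rw [show 2 * l + 1 + 1 = 2 * l + 2 by omega]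
  omega

lemma dep_child2 (l : ℕ) : dep (2 * l + 2) = dep l + 1 := by
  have h := Nat.log_div_base 2 (2 * l + 3)
  rw [show (2 * l + 3) / 2 = l + 1 by omega] at h
  have h3 : 1 ≤ Nat.log 2 (2 * l + 3) := Nat.log_pos one_lt_two (by omega)
  unfold dep
  rw [show 2 * l + 2 + 1 = 2 * l + 3 by omega]
  omega

lemma child_cases {a l : ℕ} (ha : a ≠ 0) (h : pa a = l) : a = 2 * l + 1 ∨ a = 2 * l + 2 := by
  unfold pa at h; omega

lemma g_children_ne (l : ℕ) : g (2 * l + 1) ≠ g (2 * l + 2) := by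
  unfold g
  rw [dep_child1, dep_child2]
  omega

/-- g determines depth (when depth ≥ 1). -/
lemma dep_eq_of_g_eq {w₁ w₂ : ℕ} (h1 : 1 ≤ dep w₁) (h2 : 1 ≤ dep w₂) (h : g w₁ = g w₂) :
    dep w₁ = dep w₂ := by
  unfold g at h
  have := Nat.mod_lt w₁ (y := 2) (by omega)
  have := Nat.mod_lt w₂ (y := 2) (by omega)
  omega

lemma iter_pa_zero (j : ℕ) : pa^[j] 0 = 0 := by
  induction j with
  | zero => rfl
  | succ n ih => rw [Function.iterate_succ_apply, show pa 0 = 0 from rfl, ih]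

lemma iter_pa_le (j x : ℕ) : pa^[j] x ≤ x := by
  induction j generalizing x with
  | zero => simp
  | succ n ih => rw [Function.iterate_succ_apply]; exact le_trans (ih _) (pa_le x)

lemma dep_iter_pa {j x : ℕ} (h : j ≤ dep x) : dep (pa^[j] x) = dep x - j := by
  induction j generalizing x with
  | zero => simp
  | succ n ih =>
    have hx : x ≠ 0 := ne_zero_of_dep (by omega)
    rw [Function.iterate_succ_apply, ih (by rw [dep_pa hx]; omega), dep_pa hx]
    omega

def Anc (l x : ℕ) : Prop := ∃ j, pa^[j] x = l

lemma anc_refl (x : ℕ) : Anc x x := ⟨0, rfl⟩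

lemma anc_le {l x : ℕ} (h : Anc l x) : l ≤ x := by
  obtain ⟨j, rfl⟩ := h; exact iter_pa_le j x

private lemma anc_dist_aux (j : ℕ) : ∀ x l, pa^[j] x = l →
    dep l ≤ dep x ∧ pa^[dep x - dep l] x = l := by
  induction j with
  | zero => intro x l hj; subst hj; simp
  | succ n ih =>
    intro x l hj
    by_cases hx : x = 0
    · subst hx
      rw [iter_pa_zero] at hj; subst hj
      simp [iter_pa_zero]
    · rw [Function.iterate_succ_apply] at hj
      obtain ⟨h1, h2⟩ := ih _ _ hj
      have hd := dep_pa hx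
      have hd1 := dep_pos hx
      constructor
      · omega
      · have : dep x - dep l = (dep (pa x) - dep l) + 1 := by omega
        rw [this, Function.iterate_succ_apply, h2]

lemma anc_dist {l x : ℕ} (h : Anc l x) :
    dep l ≤ dep x ∧ pa^[dep x - dep l] x = l := by
  obtain ⟨j, hj⟩ := h
  exact anc_dist_aux j x l hj

lemma anc_antisymm_dep {l x : ℕ} (h : Anc l x) (hd : dep l = dep x) : l = x := by
  have := anc_dist h
  rw [hd] at this
  simpa using this.2.symm

lemma anc_pa {l x : ℕ} (h : Anc l x) (hne : l ≠ x) : Anc l (pa x) := by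
  obtain ⟨j, hj⟩ := h
  match j, hj with
  | 0, hj => exact absurd hj.symm hne
  | (n+1), hj => exact ⟨n, by rwa [Function.iterate_succ_apply] at hj⟩

def lca (u v : ℕ) : ℕ :=
  if u = v then u else if v < u then lca (pa u) v else lca u (pa v)
termination_by u + v
decreasing_by
  · have : pa u < u := pa_lt (by omega); omega
  · have : pa v < v := pa_lt (by omega); omega

lemma lca_anc (u v : ℕ) : Anc (lca u v) u ∧ Anc (lca u v) v := by
  induction u, v using lca.induct with
  | case1 v => rw [lca, if_pos rfl]; exact ⟨anc_refl v, anc_refl v⟩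
  | case2 u v h h2 ih =>
    rw [lca, if_neg h, if_pos h2]
    obtain ⟨h3, h4⟩ := ih
    obtain ⟨j, hj⟩ := h3
    exact ⟨⟨j + 1, by rwa [Function.iterate_succ_apply]⟩, h4⟩
  | case3 u v h h2 ih =>
    rw [lca, if_neg h, if_neg h2]
    obtain ⟨h3, h4⟩ := ih
    obtain ⟨j, hj⟩ := h4
    exact ⟨h3, ⟨j + 1, by rwa [Function.iterate_succ_apply]⟩⟩

lemma lca_sup {w u v : ℕ} (hu : Anc w u) (hv : Anc w v) : dep w ≤ dep (lca u v) := by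
  induction u, v using lca.induct with
  | case1 z => rw [lca, if_pos rfl]; exact (anc_dist hu).1
  | case2 u v h h2 ih =>
    rw [lca, if_neg h, if_pos h2]
    have hwu : w ≠ u := by have := anc_le hv; omega
    exact ih (anc_pa hu hwu) hv
  | case3 u v h h2 ih =>
    rw [lca, if_neg h, if_neg h2]
    have hwv : w ≠ v := by have := anc_le hu; omega
    exact ih hu (anc_pa hv hwv)

end CFCAux

namespace CFCAux
open SimpleGraph

def BT (N : ℕ) : SimpleGraph (Fin N) :=
  SimpleGraph.fromRel (fun x y => (x : ℕ) ≠ 0 ∧ (y : ℕ) = ((x : ℕ) - 1) / 2)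

variable {N : ℕ}

/-- the `Fin` parent -/
def paF (x : Fin N) : Fin N := ⟨pa x.1, lt_of_le_of_lt (pa_le _) x.2⟩

lemma adj_paF {x : Fin N} (hx : x.1 ≠ 0) : (BT N).Adj x (paF x) := by
  rw [BT, SimpleGraph.fromRel_adj]
  refine ⟨?_, Or.inl ⟨hx, rfl⟩⟩
  intro h
  have := congrArg Fin.val h
  simp only [paF] at this
  have := pa_lt hx
  unfold pa at *
  omega

/-- the coloring -/
def col2 : Sym2 (Fin N) → ℕ := Sym2.lift ⟨fun a b => g (max a.1 b.1), fun a b => by dsimp only; rw [max_comm]⟩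

lemma col2_edge {x : Fin N} (hx : x.1 ≠ 0) : col2 s(x, paF x) = g x.1 := by
  have : max x.1 (paF x).1 = x.1 := max_eq_left (pa_le _)
  simp only [col2, Sym2.lift_mk]
  rw [this]

/-- the upward walk of length j from x -/
def W : (j : ℕ) → (x : Fin N) → j ≤ dep x.1 → (BT N).Walk x ⟨pa^[j] x.1, lt_of_le_of_lt (iter_pa_le _ _) x.2⟩
  | 0, x, _ => SimpleGraph.Walk.nil
  | (j+1), x, h => by
    have hx : x.1 ≠ 0 := ne_zero_of_dep (le_trans (by omega) h)
    have hd : j ≤ dep (paF x).1 := by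
      have := dep_pa hx
      simp only [paF]
      unfold pa at this ⊢
      omega
    exact SimpleGraph.Walk.cons (adj_paF hx)
      ((W j (paF x) hd).copy rfl (by
        apply Fin.ext
        simp only [paF]
        rw [← Function.iterate_succ_apply]))

lemma W_support (j : ℕ) (x : Fin N) (h : j ≤ dep x.1) :
    (W j x h).support.map Fin.val = (List.range (j+1)).map (fun i => pa^[i] x.1) := by
  induction j generalizing x with
  | zero => simp [W]
  | succ n ih =>
    rw [W]
    simp only [SimpleGraph.Walk.support_cons, SimpleGraph.Walk.support_copy, List.map_cons]
    rw [ih]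
    rw [List.range_succ_eq_map (n := n+1)]
    simp only [List.map_cons, List.map_map]
    congr 1

lemma W_edges_count (j : ℕ) (x : Fin N) (h : j ≤ dep x.1) (col : ℕ) :
    (W j x h).edges.countP (fun e => decide (col2 e = col)) =
      (List.range j).countP (fun i => decide (g (pa^[i] x.1) = col)) := by
  induction j generalizing x with
  | zero => simp [W]
  | succ n ih =>
    have hx : x.1 ≠ 0 := ne_zero_of_dep (le_trans (by omega) h)
    rw [W]
    simp only [SimpleGraph.Walk.edges_cons, SimpleGraph.Walk.edges_copy, List.countP_cons]
    rw [ih]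
    rw [List.range_succ_eq_map (n := n)]
    rw [List.countP_cons, List.countP_map]
    have e1 : col2 s(x, paF x) = g (pa^[0] x.1) := col2_edge hx
    rw [e1]
    congr 1

end CFCAux

namespace CFCAux
open SimpleGraph

variable {N : ℕ}

lemma chain_nodup (x : ℕ) (m : ℕ) (h : ∀ i < m, i ≤ dep x) :
    ((List.range m).map (fun i => pa^[i] x)).Nodup := by
  apply List.Nodup.map_on _ List.nodup_range
  intro i hi i' hi' hg
  rw [List.mem_range] at hi hi'
  have d1 : dep (pa^[i] x) = dep x - i := dep_iter_pa (h i hi)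
  have d2 : dep (pa^[i'] x) = dep x - i' := dep_iter_pa (h i' hi')
  rw [hg] at d1
  have := h i hi
  have := h i' hi'
  omega

lemma chain_count_one (x : ℕ) (j : ℕ) (h1 : 1 ≤ j) (h2 : j ≤ dep x) :
    (List.range j).countP (fun i => decide (g (pa^[i] x) = g (pa^[j-1] x))) = 1 := by
  obtain ⟨m, rfl⟩ : ∃ m, j = m + 1 := ⟨j - 1, by omega⟩
  rw [List.range_succ, List.countP_append]
  have h0 : (List.range m).countP (fun i => decide (g (pa^[i] x) = g (pa^[m+1-1] x))) = 0 := by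
    rw [List.countP_eq_zero]
    intro i hi
    rw [List.mem_range] at hi
    simp only [decide_eq_true_eq]
    intro hg
    have d1 : dep (pa^[i] x) = dep x - i := dep_iter_pa (by omega)
    have d2 : dep (pa^[m+1-1] x) = dep x - m := by
      rw [show m+1-1 = m by omega]; exact dep_iter_pa (by omega)
    have := dep_eq_of_g_eq (by omega) (by omega) hg
    omega
  rw [h0]
  simp

lemma chain_count_zero (x : ℕ) (j : ℕ) (col : ℕ) (h : ∀ i < j, g (pa^[i] x) ≠ col) :
    (List.range j).countP (fun i => decide (g (pa^[i] x) = col)) = 0 := by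
  rw [List.countP_eq_zero]
  intro i hi
  rw [List.mem_range] at hi
  simpa using h i hi

lemma col2_isCFC (N : ℕ) : IsCFCColoring (BT N) (col2 (N := N)) := by
  intro u v huv
  set l := lca u.1 v.1 with hl
  obtain ⟨hlu, hlv⟩ := lca_anc u.1 v.1
  obtain ⟨hDu, hju⟩ := anc_dist hlu
  obtain ⟨hDv, hjv⟩ := anc_dist hlv
  set D := dep l with hD
  set ju := dep u.1 - D with hju_def
  set jv := dep v.1 - D with hjv_def
  have hju' : ju ≤ dep u.1 := by omega
  have hjv' : jv ≤ dep v.1 := by omega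
  have hlN : l < N := lt_of_le_of_lt (anc_le hlu) u.2
  have heu : (⟨pa^[ju] u.1, lt_of_le_of_lt (iter_pa_le _ _) u.2⟩ : Fin N) = ⟨l, hlN⟩ :=
    Fin.val_inj.mp hju
  have hev : (⟨pa^[jv] v.1, lt_of_le_of_lt (iter_pa_le _ _) v.2⟩ : Fin N) = ⟨l, hlN⟩ :=
    Fin.val_inj.mp hjv
  refine ⟨((W ju u hju').copy rfl heu).append (((W jv v hjv').copy rfl hev).reverse), ?_, ?_⟩
  · -- IsPath
    rw [SimpleGraph.Walk.isPath_def, SimpleGraph.Walk.support_append,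
      SimpleGraph.Walk.support_reverse, SimpleGraph.Walk.support_copy,
      SimpleGraph.Walk.support_copy]
    apply List.Nodup.of_map Fin.val
    rw [List.map_append, List.map_tail, List.map_reverse, W_support, W_support]
    have trv : (((List.range (jv+1)).map (fun i => pa^[i] v.1)).reverse).tail
        = ((List.range jv).map (fun i => pa^[i] v.1)).reverse := by
      rw [List.range_succ, List.map_append]
      simp
    rw [trv, List.nodup_append]
    refine ⟨chain_nodup u.1 (ju+1) (by omega), List.nodup_reverse.mpr (chain_nodup v.1 jv (by omega)), ?_⟩
    intro a ha b hb hab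
    subst hab
    rw [List.mem_map] at ha
    rw [List.mem_reverse, List.mem_map] at hb
    obtain ⟨i, hi, rfl⟩ := ha
    obtain ⟨i', hi', he'⟩ := hb
    rw [List.mem_range] at hi hi'
    have h1 : Anc (pa^[i] u.1) u.1 := ⟨i, rfl⟩
    have h2 : Anc (pa^[i] u.1) v.1 := ⟨i', he'⟩
    have h3 := lca_sup h1 h2
    have d2 : dep (pa^[i'] v.1) = dep v.1 - i' := dep_iter_pa (by omega)
    rw [he'] at d2
    rw [← hl] at h3
    omega
  · -- color count
    by_cases h1 : 1 ≤ ju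
    · refine ⟨g (pa^[ju-1] u.1), ?_⟩
      rw [← List.countP_eq_length_filter, SimpleGraph.Walk.edges_append,
        SimpleGraph.Walk.edges_reverse, SimpleGraph.Walk.edges_copy,
        SimpleGraph.Walk.edges_copy, List.countP_append, List.countP_reverse]
      rw [W_edges_count, W_edges_count]
      have cu := chain_count_one u.1 ju h1 hju'
      have cv : (List.range jv).countP
          (fun i => decide (g (pa^[i] v.1) = g (pa^[ju-1] u.1))) = 0 := by
        apply chain_count_zero
        intro i hi hg
        have hDa : dep (pa^[ju-1] u.1) = D + 1 := by
          rw [dep_iter_pa (by omega)]; omega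
        have hdi : dep (pa^[i] v.1) = dep v.1 - i := dep_iter_pa (by omega)
        have hde := dep_eq_of_g_eq (by omega) (by omega) hg
        have hieq : i = jv - 1 := by omega
        subst hieq
        have hDb : dep (pa^[jv-1] v.1) = D + 1 := by
          rw [dep_iter_pa (by omega)]; omega
        have hpa : pa (pa^[ju-1] u.1) = l := by
          have h5 := (Function.iterate_succ_apply' pa (ju-1) u.1).symm
          rw [Nat.succ_eq_add_one, show ju-1+1 = ju by omega] at h5
          rw [h5, hju]
        have hpb : pa (pa^[jv-1] v.1) = l := by
          have h5 := (Function.iterate_succ_apply' pa (jv-1) v.1).symm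
          rw [Nat.succ_eq_add_one, show jv-1+1 = jv by omega] at h5
          rw [h5, hjv]
        have hab : pa^[ju-1] u.1 ≠ pa^[jv-1] v.1 := by
          intro he
          have ha1 : Anc (pa^[ju-1] u.1) u.1 := ⟨ju-1, rfl⟩
          have ha2 : Anc (pa^[ju-1] u.1) v.1 := ⟨jv-1, he.symm⟩
          have := lca_sup ha1 ha2
          rw [← hl] at this
          omega
        have ha0 : pa^[ju-1] u.1 ≠ 0 := ne_zero_of_dep (by omega)
        have hb0 : pa^[jv-1] v.1 ≠ 0 := ne_zero_of_dep (by omega)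
        rcases child_cases ha0 hpa with h3 | h3 <;> rcases child_cases hb0 hpb with h4 | h4
        · exact hab (h3.trans h4.symm)
        · apply g_children_ne l; rw [← h3, ← h4]; exact hg.symm
        · apply g_children_ne l; rw [← h4, ← h3]; exact hg
        · exact hab (h3.trans h4.symm)
      omega
    · -- ju = 0, so u is the lca
      have hju0 : ju = 0 := by omega
      have hul : u.1 = l := by rw [hl, ← hju, hju0]; rfl
      have hjv1 : 1 ≤ jv := by
        rcases Nat.eq_zero_or_pos jv with h2 | h2
        · exfalso
          apply huv
          apply Fin.val_inj.mp
          rw [hul, hl, ← hjv, h2]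
          rfl
        · omega
      refine ⟨g (pa^[jv-1] v.1), ?_⟩
      rw [← List.countP_eq_length_filter, SimpleGraph.Walk.edges_append,
        SimpleGraph.Walk.edges_reverse, SimpleGraph.Walk.edges_copy,
        SimpleGraph.Walk.edges_copy, List.countP_append, List.countP_reverse]
      rw [W_edges_count, W_edges_count]
      have cv := chain_count_one v.1 jv hjv1 hjv'
      rw [hju0]
      simpa using cv

end CFCAux

namespace CFCAux
open SimpleGraph

variable {N : ℕ}

def fin' (hN : 0 < N) (n : ℕ) : Fin N := ⟨n % N, Nat.mod_lt _ hN⟩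

lemma fin'_eq (hN : 0 < N) {n : ℕ} (h : n < N) : (fin' hN n).1 = n := Nat.mod_eq_of_lt h

def fX (hN : 0 < N) (c : Sym2 (Fin N) → ℕ) (x : ℕ) : ℕ :=
  if h : x = 0 then 0
  else fX hN c (pa x) ^^^ 2 ^ c s(fin' hN x, fin' hN (pa x))
termination_by x
decreasing_by exact pa_lt h

lemma xor_helper (b t : ℕ) : (b ^^^ t) ^^^ b = t := by
  rw [Nat.xor_comm b t, Nat.xor_assoc, Nat.xor_self, Nat.xor_zero]

lemma xor_helper2 (a b c : ℕ) : (a ^^^ b) ^^^ (b ^^^ c) = a ^^^ c := by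
  rw [Nat.xor_assoc, ← Nat.xor_assoc b b, Nat.xor_self, Nat.zero_xor]

lemma fX_adj (hN : 0 < N) (c : Sym2 (Fin N) → ℕ) {x y : Fin N} (h : (BT N).Adj x y) :
    fX hN c x.1 ^^^ fX hN c y.1 = 2 ^ c s(x, y) := by
  rw [BT, SimpleGraph.fromRel_adj] at h
  obtain ⟨hne, h | h⟩ := h
  · obtain ⟨h0, hp⟩ := h
    have hx : (fin' hN x.1) = x := Fin.val_inj.mp (fin'_eq hN x.2)
    have hy : (fin' hN (pa x.1)) = y := by
      apply Fin.val_inj.mp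
      rw [fin'_eq hN (lt_of_le_of_lt (pa_le _) x.2)]
      exact hp.symm
    rw [fX, dif_neg h0, hx, hy, hp]
    exact xor_helper _ _
  · obtain ⟨h0, hp⟩ := h
    have hy : (fin' hN y.1) = y := Fin.val_inj.mp (fin'_eq hN y.2)
    have hx : (fin' hN (pa y.1)) = x := by
      apply Fin.val_inj.mp
      rw [fin'_eq hN (lt_of_le_of_lt (pa_le _) y.2)]
      exact hp.symm
    rw [Nat.xor_comm, Sym2.eq_swap]
    rw [fX, dif_neg h0, hy, hx, hp]
    exact xor_helper _ _

lemma fX_walk (hN : 0 < N) (c : Sym2 (Fin N) → ℕ) {u v : Fin N} (p : (BT N).Walk u v) :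
    p.edges.foldr (fun e r => 2 ^ c e ^^^ r) 0 = fX hN c u.1 ^^^ fX hN c v.1 := by
  induction p with
  | nil => simp
  | @cons a b d hadj q ih =>
    rw [SimpleGraph.Walk.edges_cons, List.foldr_cons, ih, ← fX_adj hN c hadj]
    exact xor_helper2 _ _ _

lemma parity_count (c : Sym2 (Fin N) → ℕ) (col : ℕ) (L : List (Sym2 (Fin N))) :
    (L.countP (fun e => decide (c e = col))) % 2
      = ((L.foldr (fun e r => 2 ^ c e ^^^ r) 0).testBit col).toNat := by
  induction L with
  | nil => simp
  | cons e L ih =>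
    rw [List.countP_cons, List.foldr_cons, Nat.testBit_xor, Nat.testBit_two_pow]
    cases hb : (L.foldr (fun e r => 2 ^ c e ^^^ r) 0).testBit col <;>
      rw [hb] at ih <;>
      by_cases h : c e = col <;>
      simp [h, Bool.toNat] at ih ⊢ <;>
      omega

lemma fX_lt (hN : 0 < N) (c : Sym2 (Fin N) → ℕ) (t : ℕ)
    (hc : ∀ e ∈ (BT N).edgeSet, c e < t) : ∀ x, x < N → fX hN c x < 2 ^ t := by
  intro x
  induction x using Nat.strong_induction_on with
  | _ x ih =>
    intro hxN
    by_cases h0 : x = 0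
    · subst h0; rw [fX, dif_pos rfl]; exact Nat.two_pow_pos t
    · rw [fX, dif_neg h0]
      apply Nat.xor_lt_two_pow
      · exact ih (pa x) (pa_lt h0) (lt_trans (pa_lt h0) hxN)
      · apply Nat.pow_lt_pow_right one_lt_two
        apply hc
        rw [SimpleGraph.mem_edgeSet, BT, SimpleGraph.fromRel_adj]
        constructor
        · intro he
          have h2 := congrArg Fin.val he
          rw [fin'_eq hN hxN, fin'_eq hN (lt_of_le_of_lt (pa_le x) hxN)] at h2
          have := pa_lt h0
          omega
        · left
          refine ⟨?_, ?_⟩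
          · rw [fin'_eq hN hxN]; exact h0
          · rw [fin'_eq hN hxN, fin'_eq hN (lt_of_le_of_lt (pa_le x) hxN)]
            exact rfl

lemma lower_bound (hN : 0 < N) (t : ℕ) (c : Sym2 (Fin N) → ℕ)
    (hc : ∀ e ∈ (BT N).edgeSet, c e < t) (hcfc : IsCFCColoring (BT N) c) : N ≤ 2 ^ t := by
  have hinj : Function.Injective
      (fun x : Fin N => (⟨fX hN c x.1, fX_lt hN c t hc x.1 x.2⟩ : Fin (2 ^ t))) := by
    intro x y hxy
    by_contra hne
    obtain ⟨p, hp, col, hcol⟩ := hcfc x y hne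
    have he : fX hN c x.1 = fX hN c y.1 := by
      have := congrArg Fin.val hxy; simpa using this
    have h1 := parity_count c col p.edges
    rw [fX_walk hN c p, he, Nat.xor_self] at h1
    rw [← List.countP_eq_length_filter] at hcol
    rw [hcol] at h1
    simp at h1
  have := Fintype.card_le_of_injective _ hinj
  simpa using this

lemma col2_mem_edge {e : Sym2 (Fin N)} (he : e ∈ (BT N).edgeSet) :
    ∃ x : Fin N, x.1 ≠ 0 ∧ col2 e = g x.1 := by
  induction e using Sym2.ind with
  | _ x y =>
    rw [SimpleGraph.mem_edgeSet, BT, SimpleGraph.fromRel_adj] at he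
    obtain ⟨hne, h | h⟩ := he
    · refine ⟨x, h.1, ?_⟩
      simp only [col2, Sym2.lift_mk]
      congr 1
      have hyp : y.1 = pa x.1 := h.2
      rw [hyp]
      exact max_eq_left (pa_le _)
    · refine ⟨y, h.1, ?_⟩
      simp only [col2, Sym2.lift_mk]
      congr 1
      have hxp : x.1 = pa y.1 := h.2
      rw [hxp]
      exact max_eq_right (pa_le _)

end CFCAux

open CFCAux

/-- For the complete binary tree `B_k^*` with `k` levels (`k ≥ 2`),
`k ≤ cfc(B_k^*) ≤ 2k - 2`. -/
theorem cfc_completeBinaryTree (k : ℕ) (hk : 2 ≤ k) :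
    k ≤ cfcNum (completeBinaryTree k) ∧ cfcNum (completeBinaryTree k) ≤ 2 * k - 2 := by
  have h4 : 4 ≤ 2 ^ k := by
    calc (4:ℕ) = 2 ^ 2 := rfl
    _ ≤ 2 ^ k := Nat.pow_le_pow_right (by omega) hk
  have hN : 0 < 2 ^ k - 1 := by omega
  have hmem : (2 * k - 2) ∈ {t | ∃ c : Sym2 (Fin (2 ^ k - 1)) → ℕ,
      (∀ e ∈ (completeBinaryTree k).edgeSet, c e < t) ∧
      IsCFCColoring (completeBinaryTree k) c} := by
    refine ⟨col2, ?_, col2_isCFC (2 ^ k - 1)⟩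
    intro e he
    obtain ⟨x, hx0, hce⟩ := col2_mem_edge (N := 2 ^ k - 1) he
    rw [hce]
    have hxk : x.1 + 1 < 2 ^ k := by have := x.2; omega
    have hd : dep x.1 < k := Nat.log_lt_of_lt_pow (by omega) hxk
    have hd1 : 1 ≤ dep x.1 := dep_pos hx0
    have hb : x.1 % 2 < 2 := Nat.mod_lt _ (by omega)
    unfold g
    omega
  refine ⟨?_, Nat.sInf_le hmem⟩
  have hsmem := Nat.sInf_mem (s := {t | ∃ c : Sym2 (Fin (2 ^ k - 1)) → ℕ,
      (∀ e ∈ (completeBinaryTree k).edgeSet, c e < t) ∧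
      IsCFCColoring (completeBinaryTree k) c}) ⟨2 * k - 2, hmem⟩
  obtain ⟨c, hc, hcfc⟩ := hsmem
  have hb : 2 ^ k - 1 ≤ 2 ^ (cfcNum (completeBinaryTree k)) :=
    lower_bound hN _ c hc hcfc
  by_contra hcon
  push_neg at hcon
  have h6 : 2 ^ (cfcNum (completeBinaryTree k)) ≤ 2 ^ (k - 1) :=
    Nat.pow_le_pow_right (by omega) (by omega)
  have h7 : (2:ℕ) ^ (k - 1) * 2 = 2 ^ k := by
    rw [← Nat.pow_succ, Nat.succ_eq_add_one, show k - 1 + 1 = k by omega]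
  have h8 : (2:ℕ) ^ 1 ≤ 2 ^ (k - 1) := Nat.pow_le_pow_right (by omega) (by omega)
  omega
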